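/- Let G be a finite simple graph containing distinct vertices v_1, v_2, v_3, v_4, v_5 and pairwise distinct vertices x_1, x_2, x_3, x_4 with x_i ∉ {v_1,…,v_5} for each i, such that v_1v_2, v_2v_3, v_3v_4, v_4v_5, v_5v_1 are edges of G, and for each i ∈ {1,2,3,4} the neighborhood of v_i in G is exactly {v_{i−1}, v_{i+1}, x_i} (indices modulo 5, with v_0 = v_5). Let b ∈ ℚ with 1/3 ≤ b ≤ 1/2 and let N be a common denominator of the constant function c_b. Suppose the graph H = G − {v_1, v_2, v_3, v_4} has a tight (c_b,N)-coloring ψ satisfying ψ(x_2) = ψ(v_5) and ψ(x_3) = ψ(x_4). Then G has an (f,N)-coloring that agrees with ψ on V(H), where f(v_i) = 1 − 2b for i ∈ {1,2,3,4} and f(u) = b for every other vertex u. -/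

import Mathlib

open MeasureTheory

section Aux

variable {V : Type*} [DecidableEq V] (v1 v2 v3 v4 : V)
  (S1 S2 S3 S4 : Finset ℕ) (rest : ∀ u : V, u ∉ ({v1, v2, v3, v4} : Set V) → Finset ℕ)

/-- Extend a partial coloring by values on four specified vertices. -/
def extFun : V → Finset ℕ := fun u =>
  if h1 : u = v1 then S1 else if h2 : u = v2 then S2 else if h3 : u = v3 then S3
  else if h4 : u = v4 then S4 else rest u (by simp [Set.mem_insert_iff, h1, h2, h3, h4])

lemma extFun_eq1 : extFun v1 v2 v3 v4 S1 S2 S3 S4 rest v1 = S1 := dif_pos rfl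

lemma extFun_eq2 (h : v2 ≠ v1) : extFun v1 v2 v3 v4 S1 S2 S3 S4 rest v2 = S2 := by
  unfold extFun; rw [dif_neg h, dif_pos rfl]

lemma extFun_eq3 (h1 : v3 ≠ v1) (h2 : v3 ≠ v2) :
    extFun v1 v2 v3 v4 S1 S2 S3 S4 rest v3 = S3 := by
  unfold extFun; rw [dif_neg h1, dif_neg h2, dif_pos rfl]

lemma extFun_eq4 (h1 : v4 ≠ v1) (h2 : v4 ≠ v2) (h3 : v4 ≠ v3) :
    extFun v1 v2 v3 v4 S1 S2 S3 S4 rest v4 = S4 := by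
  unfold extFun; rw [dif_neg h1, dif_neg h2, dif_neg h3, dif_pos rfl]

lemma extFun_out {u : V} (hu : u ∉ ({v1, v2, v3, v4} : Set V)) :
    extFun v1 v2 v3 v4 S1 S2 S3 S4 rest u = rest u hu := by
  have h1 : u ≠ v1 := fun h => hu (by simp [h])
  have h2 : u ≠ v2 := fun h => hu (by simp [h])
  have h3 : u ≠ v3 := fun h => hu (by simp [h])
  have h4 : u ≠ v4 := fun h => hu (by simp [h])
  unfold extFun; rw [dif_neg h1, dif_neg h2, dif_neg h3, dif_neg h4]

end Aux

/-- `φ` is an `f`-coloring of `G`: it assigns to each vertex a measurable subset of `[0,1]`,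
adjacent vertices get disjoint sets, and the set of `v` has measure at least `f v`. -/
def IsFracColoring {V : Type*} (G : SimpleGraph V) (f : V → ℚ) (φ : V → Set ℝ) : Prop :=
  (∀ v, φ v ⊆ Set.Icc (0 : ℝ) 1) ∧
  (∀ v, MeasurableSet (φ v)) ∧
  (∀ u v, G.Adj u v → φ u ∩ φ v = ∅) ∧
  (∀ v, ENNReal.ofReal ((f v : ℝ)) ≤ volume (φ v))

/-- A tight `f`-coloring: the measure of each `φ v` equals `f v`. -/
def IsTightFracColoring {V : Type*} (G : SimpleGraph V) (f : V → ℚ) (φ : V → Set ℝ) : Prop :=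
  IsFracColoring G f φ ∧ ∀ v, volume (φ v) = ENNReal.ofReal ((f v : ℝ))

/-- `N ≥ 1` is a common denominator of `f` if `N * f v` is an integer for every `v`. -/
def IsCommonDenom {V : Type*} (N : ℕ) (f : V → ℚ) : Prop :=
  1 ≤ N ∧ ∀ v, ∃ m : ℤ, (N : ℚ) * f v = (m : ℚ)

/-- `ψ` is an `(f,N)`-coloring of `G`: each vertex gets a subset of `{1,…,N}`,
adjacent vertices get disjoint sets, and `|ψ v| ≥ N * f v` for every vertex `v`. -/
def IsFNColoring {V : Type*} (G : SimpleGraph V) (f : V → ℚ) (N : ℕ) (ψ : V → Finset ℕ) : Prop :=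
  (∀ v, ψ v ⊆ Finset.Icc 1 N) ∧
  (∀ u v, G.Adj u v → Disjoint (ψ u) (ψ v)) ∧
  (∀ v, (N : ℚ) * f v ≤ ((ψ v).card : ℚ))

/-- A tight `(f,N)`-coloring: `|ψ v| = N * f v` for every vertex `v`. -/
def IsTightFNColoring {V : Type*} (G : SimpleGraph V) (f : V → ℚ) (N : ℕ)
    (ψ : V → Finset ℕ) : Prop :=
  IsFNColoring G f N ψ ∧ ∀ v, ((ψ v).card : ℚ) = (N : ℚ) * f v

/-- Extension of a tight `(c_b,N)`-coloring of `G − {v₁,v₂,v₃,v₄}` (identified suitably,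
i.e. with `ψ(x₂) = ψ(v₅)` and `ψ(x₃) = ψ(x₄)`) to an `(f,N)`-coloring of `G`, where
`f = 1 − 2b` on `{v₁,v₂,v₃,v₄}` and `f = b` elsewhere.  Here `v₁v₂v₃v₄v₅` is a 5-cycle,
each `vᵢ` (for `i ≤ 4`) has neighborhood exactly `{vᵢ₋₁, vᵢ₊₁, xᵢ}`, the nine listed
vertices are pairwise distinct, and `1/3 ≤ b ≤ 1/2`. -/
theorem stmt10 {V : Type*} [Fintype V] [DecidableEq V] (G : SimpleGraph V)
    (v1 v2 v3 v4 v5 x1 x2 x3 x4 : V)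
    (hnodup : ([v1, v2, v3, v4, v5, x1, x2, x3, x4] : List V).Nodup)
    (e12 : G.Adj v1 v2) (e23 : G.Adj v2 v3) (e34 : G.Adj v3 v4)
    (e45 : G.Adj v4 v5) (e51 : G.Adj v5 v1)
    (hN1 : G.neighborSet v1 = {v5, v2, x1})
    (hN2 : G.neighborSet v2 = {v1, v3, x2})
    (hN3 : G.neighborSet v3 = {v2, v4, x3})
    (hN4 : G.neighborSet v4 = {v3, v5, x4})
    (b : ℚ) (hb1 : 1/3 ≤ b) (hb2 : b ≤ 1/2)
    (N : ℕ) (hN : IsCommonDenom N (fun _ : V => b))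
    (hv5S : v5 ∉ ({v1, v2, v3, v4} : Set V))
    (hx2S : x2 ∉ ({v1, v2, v3, v4} : Set V))
    (hx3S : x3 ∉ ({v1, v2, v3, v4} : Set V))
    (hx4S : x4 ∉ ({v1, v2, v3, v4} : Set V))
    (ψ : ↥({u : V | u ∉ ({v1, v2, v3, v4} : Set V)}) → Finset ℕ)
    (hψ : IsTightFNColoring (G.induce {u : V | u ∉ ({v1, v2, v3, v4} : Set V)})
      (fun _ => b) N ψ)
    (hψ25 : ψ ⟨x2, hx2S⟩ = ψ ⟨v5, hv5S⟩)
    (hψ34 : ψ ⟨x3, hx3S⟩ = ψ ⟨x4, hx4S⟩) :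
    ∃ ψ' : V → Finset ℕ,
      IsFNColoring G
        (fun u => if u = v1 ∨ u = v2 ∨ u = v3 ∨ u = v4 then 1 - 2 * b else b) N ψ' ∧
      ∀ u (hu : u ∉ ({v1, v2, v3, v4} : Set V)), ψ' u = ψ ⟨u, hu⟩ := by
  classical
  -- distinctness facts
  have h21 : v2 ≠ v1 := by rintro rfl; simp at hnodup
  have h31 : v3 ≠ v1 := by rintro rfl; simp at hnodup
  have h32 : v3 ≠ v2 := by rintro rfl; simp at hnodup
  have h41 : v4 ≠ v1 := by rintro rfl; simp at hnodup
  have h42 : v4 ≠ v2 := by rintro rfl; simp at hnodup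
  have h43 : v4 ≠ v3 := by rintro rfl; simp at hnodup
  have hx1S : x1 ∉ ({v1, v2, v3, v4} : Set V) := by
    simp only [Set.mem_insert_iff, Set.mem_singleton_iff, not_or]
    refine ⟨?_, ?_, ?_, ?_⟩ <;> (rintro rfl; simp at hnodup)
  -- neighborhood facts
  have adj1 : ∀ w, G.Adj v1 w → w = v5 ∨ w = v2 ∨ w = x1 := by
    intro w h
    have : w ∈ G.neighborSet v1 := h
    rw [hN1] at this; simpa using this
  have adj2 : ∀ w, G.Adj v2 w → w = v1 ∨ w = v3 ∨ w = x2 := by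
    intro w h
    have : w ∈ G.neighborSet v2 := h
    rw [hN2] at this; simpa using this
  have adj3 : ∀ w, G.Adj v3 w → w = v2 ∨ w = v4 ∨ w = x3 := by
    intro w h
    have : w ∈ G.neighborSet v3 := h
    rw [hN3] at this; simpa using this
  have adj4 : ∀ w, G.Adj v4 w → w = v3 ∨ w = v5 ∨ w = x4 := by
    intro w h
    have : w ∈ G.neighborSet v4 := h
    rw [hN4] at this; simpa using this
  -- abbreviations
  set U : Finset ℕ := Finset.Icc 1 N with hUdef
  set A : Finset ℕ := ψ ⟨v5, hv5S⟩ with hAdef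
  set B : Finset ℕ := ψ ⟨x1, hx1S⟩ with hBdef
  set C : Finset ℕ := ψ ⟨x4, hx4S⟩ with hCdef
  set k : ℕ := A.card with hkdef
  have hkQ : (k : ℚ) = (N : ℚ) * b := by
    have := hψ.2 ⟨v5, hv5S⟩
    simpa [hAdef, hkdef] using this
  have hcards : ∀ z, (ψ z).card = k := by
    intro z
    have h1 := hψ.2 z
    have h2 := hψ.2 ⟨v5, hv5S⟩
    have : ((ψ z).card : ℚ) = (k : ℚ) := by rw [h1, hkdef, hAdef, h2]
    exact_mod_cast this
  have hNQ : (0 : ℚ) ≤ (N : ℚ) := Nat.cast_nonneg N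
  have h2k : 2 * k ≤ N := by
    have : ((2 * k : ℕ) : ℚ) ≤ (N : ℚ) := by push_cast; nlinarith [hkQ, hb2, hNQ]
    exact_mod_cast this
  have h3k : N ≤ 3 * k := by
    have : ((N : ℕ) : ℚ) ≤ ((3 * k : ℕ) : ℚ) := by push_cast; nlinarith [hkQ, hb1, hNQ]
    exact_mod_cast this
  set m : ℕ := N - 2 * k with hmdef
  have hmQ : (m : ℚ) = (N : ℚ) * (1 - 2 * b) := by
    have : (m : ℚ) = (N : ℚ) - 2 * (k : ℚ) := by
      rw [hmdef]; push_cast [Nat.cast_sub h2k]; ring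
    rw [this, hkQ]; ring
  have hUcard : U.card = N := by simp [hUdef]
  have hAcard : A.card = k := rfl
  have hBcard : B.card = k := hcards _
  have hCcard : C.card = k := hcards _
  have hAU : A ⊆ U := hψ.1.1 _
  -- helper for disjointness
  have sdisj : ∀ {S T R : Finset ℕ}, S ⊆ T \ R → Disjoint S R := by
    intro S T R h
    exact Finset.disjoint_left.mpr fun a ha => (Finset.mem_sdiff.mp (h ha)).2
  -- construct S1
  obtain ⟨S1, hS1sub, hS1card⟩ : ∃ t ⊆ U \ (A ∪ B), t.card = m := by
    apply Finset.exists_subset_card_eq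
    have h1 := Finset.le_card_sdiff (A ∪ B) U
    have h2 := Finset.card_union_le A B
    omega
  have dS1AB : Disjoint S1 (A ∪ B) := sdisj hS1sub
  have dS1A : Disjoint S1 A := dS1AB.mono_right Finset.subset_union_left
  have dS1B : Disjoint S1 B := dS1AB.mono_right Finset.subset_union_right
  have hS1U : S1 ⊆ U := hS1sub.trans (Finset.sdiff_subset)
  -- construct S2
  obtain ⟨S2, hS2sub, hS2card⟩ : ∃ t ⊆ U \ (A ∪ S1), t.card = m := by
    apply Finset.exists_subset_card_eq
    have h1 := Finset.le_card_sdiff (A ∪ S1) U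
    have h2 := Finset.card_union_le A S1
    omega
  have dS2AS1 : Disjoint S2 (A ∪ S1) := sdisj hS2sub
  have dS2A : Disjoint S2 A := dS2AS1.mono_right Finset.subset_union_left
  have dS2S1 : Disjoint S2 S1 := dS2AS1.mono_right Finset.subset_union_right
  have hS2U : S2 ⊆ U := hS2sub.trans (Finset.sdiff_subset)
  -- construct S3 = S3a ∪ S3b
  have hPcard : (A \ C).card + (A ∩ C).card = k := by
    rw [← hAcard]; exact Finset.card_sdiff_add_card_inter A C
  have hACcard : (A ∪ C).card + (A ∩ C).card = 2 * k := by
    have := Finset.card_union_add_card_inter A C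
    omega
  obtain ⟨S3a, hS3asub, hS3acard⟩ : ∃ t ⊆ A \ C, t.card = min m (A \ C).card :=
    Finset.exists_subset_card_eq (min_le_right _ _)
  have hQ1 := Finset.le_card_sdiff (A ∪ C ∪ S2) U
  have hQ2 := Finset.card_union_le (A ∪ C) S2
  obtain ⟨S3b, hS3bsub, hS3bcard⟩ :
      ∃ t ⊆ U \ (A ∪ C ∪ S2), t.card = m - min m (A \ C).card := by
    apply Finset.exists_subset_card_eq
    omega
  set S3 : Finset ℕ := S3a ∪ S3b with hS3def
  have hS3aA : S3a ⊆ A := hS3asub.trans Finset.sdiff_subset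
  have dS3bACS2 : Disjoint S3b (A ∪ C ∪ S2) := sdisj hS3bsub
  have dS3bA : Disjoint S3b A :=
    dS3bACS2.mono_right (Finset.subset_union_left.trans Finset.subset_union_left)
  have dS3bC : Disjoint S3b C :=
    dS3bACS2.mono_right (Finset.subset_union_right.trans Finset.subset_union_left)
  have dS3bS2 : Disjoint S3b S2 := dS3bACS2.mono_right Finset.subset_union_right
  have hS3bU : S3b ⊆ U := hS3bsub.trans Finset.sdiff_subset
  have dS3ab : Disjoint S3a S3b := (dS3bA.mono_right hS3aA).symm
  have hS3card : S3.card = m := by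
    rw [hS3def, Finset.card_union_of_disjoint dS3ab, hS3acard, hS3bcard]
    omega
  have hS3U : S3 ⊆ U := Finset.union_subset (hS3aA.trans hAU) hS3bU
  have dS3C : Disjoint S3 C := by
    rw [hS3def, Finset.disjoint_union_left]
    exact ⟨sdisj hS3asub, dS3bC⟩
  have dS3S2 : Disjoint S3 S2 := by
    rw [hS3def, Finset.disjoint_union_left]
    exact ⟨(dS2A.mono_right hS3aA).symm, dS3bS2⟩
  have dS3A' : Disjoint S3b A := dS3bA
  -- construct S4
  obtain ⟨S4, hS4sub, hS4card⟩ : ∃ t ⊆ U \ (A ∪ C ∪ S3b), t.card = m := by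
    apply Finset.exists_subset_card_eq
    have h1 := Finset.le_card_sdiff (A ∪ C ∪ S3b) U
    have h2 := Finset.card_union_le (A ∪ C) S3b
    omega
  have dS4ACS3b : Disjoint S4 (A ∪ C ∪ S3b) := sdisj hS4sub
  have dS4A : Disjoint S4 A :=
    dS4ACS3b.mono_right (Finset.subset_union_left.trans Finset.subset_union_left)
  have dS4C : Disjoint S4 C :=
    dS4ACS3b.mono_right (Finset.subset_union_right.trans Finset.subset_union_left)
  have dS4S3 : Disjoint S4 S3 := by
    rw [hS3def, Finset.disjoint_union_right]
    exact ⟨dS4A.mono_right hS3aA, dS4ACS3b.mono_right Finset.subset_union_right⟩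
  have hS4U : S4 ⊆ U := hS4sub.trans Finset.sdiff_subset
  -- the extended coloring
  set rest : ∀ u : V, u ∉ ({v1, v2, v3, v4} : Set V) → Finset ℕ :=
    fun u hu => ψ ⟨u, hu⟩ with hrest
  set ψ' : V → Finset ℕ := extFun v1 v2 v3 v4 S1 S2 S3 S4 rest with hψ'def
  have E1 : ψ' v1 = S1 := extFun_eq1 ..
  have E2 : ψ' v2 = S2 := extFun_eq2 _ _ _ _ _ _ _ _ _ h21
  have E3 : ψ' v3 = S3 := extFun_eq3 _ _ _ _ _ _ _ _ _ h31 h32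
  have E4 : ψ' v4 = S4 := extFun_eq4 _ _ _ _ _ _ _ _ _ h41 h42 h43
  have Eout : ∀ u (hu : u ∉ ({v1, v2, v3, v4} : Set V)), ψ' u = ψ ⟨u, hu⟩ :=
    fun u hu => extFun_out _ _ _ _ _ _ _ _ _ hu
  refine ⟨ψ', ⟨?_, ?_, ?_⟩, Eout⟩
  · -- subsets of Icc 1 N
    intro v
    by_cases hv : v ∉ ({v1, v2, v3, v4} : Set V)
    · rw [Eout v hv]; exact hψ.1.1 _
    · rw [not_not] at hv
      simp only [Set.mem_insert_iff, Set.mem_singleton_iff] at hv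
      rcases hv with rfl | rfl | rfl | rfl
      · rw [E1]; exact hS1U
      · rw [E2]; exact hS2U
      · rw [E3]; exact hS3U
      · rw [E4]; exact hS4U
  · -- disjointness on edges
    have key : ∀ u w, G.Adj u w → (u = v1 ∨ u = v2 ∨ u = v3 ∨ u = v4) →
        Disjoint (ψ' u) (ψ' w) := by
      intro u w hadj hu
      rcases hu with rfl | rfl | rfl | rfl
      · rcases adj1 w hadj with rfl | rfl | rfl
        · rw [E1, Eout w hv5S]; exact dS1A
        · rw [E1, E2]; exact dS2S1.symm
        · rw [E1, Eout w hx1S]; exact dS1B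
      · rcases adj2 w hadj with rfl | rfl | rfl
        · rw [E2, E1]; exact dS2S1
        · rw [E2, E3]; exact dS3S2.symm
        · rw [E2, Eout w hx2S, hψ25]; exact dS2A
      · rcases adj3 w hadj with rfl | rfl | rfl
        · rw [E3, E2]; exact dS3S2
        · rw [E3, E4]; exact dS4S3.symm
        · rw [E3, Eout w hx3S, hψ34]; exact dS3C
      · rcases adj4 w hadj with rfl | rfl | rfl
        · rw [E4, E3]; exact dS4S3
        · rw [E4, Eout w hv5S]; exact dS4A
        · rw [E4, Eout w hx4S]; exact dS4C
    intro u w hadj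
    by_cases hu : u = v1 ∨ u = v2 ∨ u = v3 ∨ u = v4
    · exact key u w hadj hu
    · by_cases hw : w = v1 ∨ w = v2 ∨ w = v3 ∨ w = v4
      · exact (key w u hadj.symm hw).symm
      · have hu' : u ∉ ({v1, v2, v3, v4} : Set V) := by
          simp only [Set.mem_insert_iff, Set.mem_singleton_iff]; exact hu
        have hw' : w ∉ ({v1, v2, v3, v4} : Set V) := by
          simp only [Set.mem_insert_iff, Set.mem_singleton_iff]; exact hw
        rw [Eout u hu', Eout w hw']
        exact hψ.1.2.1 ⟨u, hu'⟩ ⟨w, hw'⟩ hadj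
  · -- cardinality lower bounds
    intro v
    by_cases hv : v ∉ ({v1, v2, v3, v4} : Set V)
    · have hne1 : ¬(v = v1 ∨ v = v2 ∨ v = v3 ∨ v = v4) := by
        simpa only [Set.mem_insert_iff, Set.mem_singleton_iff] using hv
      rw [Eout v hv]
      simp only [hne1, if_false]
      exact hψ.1.2.2 ⟨v, hv⟩
    · rw [not_not] at hv
      simp only [Set.mem_insert_iff, Set.mem_singleton_iff] at hv
      have goal : ∀ S : Finset ℕ, S.card = m → (N : ℚ) * (1 - 2 * b) ≤ (S.card : ℚ) := by
        intro S hS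
        rw [hS, hmQ]
      rcases hv with rfl | rfl | rfl | rfl
      · simp only [true_or, if_true, E1]; exact goal S1 hS1card
      · simp only [true_or, or_true, if_true, E2]; exact goal S2 hS2card
      · simp only [true_or, or_true, if_true, E3]; exact goal S3 hS3card
      · simp only [or_true, if_true, E4]; exact goal S4 hS4card
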